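/- Let E be a separable Banach space, n ≥ 1, and let (φ(t))_{t ∈ [0,1]^n} be an E-valued random field with almost surely continuous sample paths. Suppose that for every q ∈ (2,∞) there exists K_q > 0 such that (E‖φ(t)‖^q)^{1/q} ≤ K_q (E‖φ(t)‖²)^{1/2} and (E‖φ(s) − φ(t)‖^q)^{1/q} ≤ K_q (E‖φ(s) − φ(t)‖²)^{1/2} for all s, t ∈ [0,1]^n, and suppose that E‖φ(s) − φ(t)‖² ≤ K₀ |s−t|^δ for some K₀, δ > 0 and all s, t ∈ [0,1]^n. Then for every p > 0 there exists a constant C > 0 (depending on p, n, δ and the constants K_q, but not on K₀ or φ otherwise) such that E sup_{t ∈ [0,1]^n} ‖φ(t)‖^p ≤ C (K₀ + E‖φ(0)‖²)^{p/2}. -/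

import Mathlib

open MeasureTheory Filter
open scoped ENNReal

/-- The Euclidean distance on the parameter box `[0,1]ⁿ`. -/
noncomputable def eudist {n : ℕ} (s t : Fin n → ℝ) : ℝ :=
  Real.sqrt (∑ i, (s i - t i) ^ 2)





namespace KC

lemma eudist_eq_dist {n : ℕ} (s t : Fin n → ℝ) :
    eudist s t = dist ((WithLp.equiv 2 (Fin n → ℝ)).symm s) ((WithLp.equiv 2 (Fin n → ℝ)).symm t) := by
  rw [EuclideanSpace.dist_eq]
  unfold eudist
  congr 1
  refine Finset.sum_congr rfl fun i _ => ?_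
  rw [WithLp.equiv_symm_apply, WithLp.ofLp_toLp, WithLp.ofLp_toLp, Real.dist_eq, sq_abs]

lemma eudist_nonneg {n : ℕ} (s t : Fin n → ℝ) : 0 ≤ eudist s t := Real.sqrt_nonneg _

lemma eudist_comm {n : ℕ} (s t : Fin n → ℝ) : eudist s t = eudist t s := by
  unfold eudist; congr 1; refine Finset.sum_congr rfl fun i _ => ?_; ring

lemma eudist_triangle {n : ℕ} (s t u : Fin n → ℝ) : eudist s u ≤ eudist s t + eudist t u := by
  rw [eudist_eq_dist, eudist_eq_dist, eudist_eq_dist]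
  exact dist_triangle _ _ _

lemma eudist_le {n : ℕ} {s t : Fin n → ℝ} {c : ℝ} (hc : 0 ≤ c)
    (h : ∀ i, |s i - t i| ≤ c) : eudist s t ≤ Real.sqrt n * c := by
  have h1 : ∑ i, (s i - t i) ^ 2 ≤ (n : ℝ) * c ^ 2 := by
    calc ∑ i, (s i - t i) ^ 2 ≤ ∑ _i : Fin n, c ^ 2 := by
          refine Finset.sum_le_sum fun i _ => ?_
          rw [← sq_abs]
          exact pow_le_pow_left₀ (abs_nonneg _) (h i) 2
      _ = (n : ℝ) * c ^ 2 := by simp [mul_comm]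
  calc eudist s t ≤ Real.sqrt ((n : ℝ) * c ^ 2) := Real.sqrt_le_sqrt h1
    _ = Real.sqrt n * c := by
        rw [Real.sqrt_mul (Nat.cast_nonneg n), Real.sqrt_sq hc]





noncomputable def grid (n m : ℕ) : Finset (Fin n → ℝ) :=
  Finset.image (fun k : Fin n → Fin (2 ^ m + 1) => fun i => ((k i : ℕ) : ℝ) / 2 ^ m)
    Finset.univ

lemma grid_card_le (n m : ℕ) : (grid n m).card ≤ (2 ^ m + 1) ^ n := by
  classical
  refine (Finset.card_image_le).trans ?_
  simp [Fintype.card_fun]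

lemma grid_subset_Icc (n m : ℕ) : ↑(grid n m) ⊆ Set.Icc (0 : Fin n → ℝ) 1 := by
  intro x hx
  simp only [grid, Finset.coe_image, Set.mem_image] at hx
  obtain ⟨k, -, rfl⟩ := hx
  constructor
  · intro i
    positivity
  · intro i
    have hk : ((k i : ℕ) : ℝ) ≤ 2 ^ m := by
      have := (k i).is_lt
      have : (k i : ℕ) ≤ 2 ^ m := Nat.lt_succ_iff.mp this
      exact_mod_cast this
    simp only [Pi.one_apply]
    rw [div_le_one (by positivity)]
    exact hk

noncomputable def proj (n m : ℕ) (t : Fin n → ℝ) : Fin n → ℝ :=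
  fun i => (⌊t i * 2 ^ m⌋ : ℝ) / 2 ^ m

lemma proj_mem_grid {n m : ℕ} {t : Fin n → ℝ} (ht : t ∈ Set.Icc (0 : Fin n → ℝ) 1) :
    proj n m t ∈ grid n m := by
  classical
  have h0 : ∀ i, (0 : ℤ) ≤ ⌊t i * 2 ^ m⌋ := fun i =>
    Int.floor_nonneg.2 (mul_nonneg (ht.1 i) (by positivity))
  have h1 : ∀ i, ⌊t i * 2 ^ m⌋ ≤ (2 ^ m : ℤ) := by
    intro i
    have hti : t i ≤ 1 := ht.2 i
    have : t i * 2 ^ m ≤ 2 ^ m := by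
      nlinarith [pow_pos (two_pos (α := ℝ)) m]
    calc ⌊t i * 2 ^ m⌋ ≤ ⌊(2 ^ m : ℝ)⌋ := Int.floor_le_floor this
      _ = (2 ^ m : ℤ) := by
          rw [show ((2:ℝ) ^ m) = (((2 ^ m : ℤ) : ℝ)) by push_cast; ring, Int.floor_intCast]
  refine Finset.mem_image.2 ⟨fun i => ⟨(⌊t i * 2 ^ m⌋).toNat, ?_⟩, Finset.mem_univ _, ?_⟩
  · have : (⌊t i * 2 ^ m⌋).toNat ≤ 2 ^ m := by
      rw [Int.toNat_le]
      exact_mod_cast h1 i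
    omega
  · funext i
    simp only [proj]
    congr 1
    exact_mod_cast congrArg (Int.cast : ℤ → ℝ) (Int.toNat_of_nonneg (h0 i))

lemma abs_sub_proj {n : ℕ} (m : ℕ) (t : Fin n → ℝ) (i : Fin n) :
    |t i - proj n m t i| ≤ (2⁻¹ : ℝ) ^ m := by
  have h2 : (0:ℝ) < 2 ^ m := by positivity
  set x := t i * 2 ^ m with hx
  have ha := Int.floor_le x
  have hb := Int.lt_floor_add_one x
  have key : t i - proj n m t i = (x - ⌊x⌋) / 2 ^ m := by
    simp only [proj, hx]
    field_simp
  rw [key, abs_of_nonneg (div_nonneg (by linarith) h2.le)]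
  rw [div_le_iff₀ h2]
  have : (2⁻¹ : ℝ) ^ m * 2 ^ m = 1 := by
    rw [← mul_pow]; norm_num
  rw [this]
  linarith

lemma eudist_proj {n : ℕ} (m : ℕ) (t : Fin n → ℝ) :
    eudist t (proj n m t) ≤ Real.sqrt n * (2⁻¹ : ℝ) ^ m :=
  eudist_le (by positivity) (abs_sub_proj m t)

lemma tendsto_proj {n : ℕ} (t : Fin n → ℝ) :
    Tendsto (fun m => proj n m t) atTop (nhds t) := by
  rw [tendsto_pi_nhds]
  intro i
  rw [tendsto_iff_dist_tendsto_zero]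
  refine squeeze_zero (fun m => dist_nonneg) (fun m => ?_)
    (tendsto_pow_atTop_nhds_zero_of_lt_one (by norm_num : (0:ℝ) ≤ 2⁻¹) (by norm_num))
  rw [Real.dist_eq, abs_sub_comm]
  exact abs_sub_proj m t i



variable {Ω : Type*} [MeasurableSpace Ω] {P : Measure Ω}

lemma rpow_rpow_inv {x : ℝ≥0∞} {q : ℝ} (hq : q ≠ 0) : (x ^ (1/q)) ^ q = x := by
  rw [← ENNReal.rpow_mul, one_div, inv_mul_cancel₀ hq, ENNReal.rpow_one]

lemma rpow_inv_rpow' {x : ℝ≥0∞} {q : ℝ} (hq : q ≠ 0) : (x ^ q) ^ (1/q) = x := by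
  rw [← ENNReal.rpow_mul, one_div, mul_inv_cancel₀ hq, ENNReal.rpow_one]

lemma iSup_rpow {f : ℕ → ℝ≥0∞} {r : ℝ} (hr : 0 < r) :
    (⨆ M, f M) ^ r = ⨆ M, f M ^ r := by
  apply le_antisymm
  · have h1 : ∀ M, f M ≤ (⨆ N, f N ^ r) ^ (1/r) := fun M => by
      rw [one_div, ENNReal.le_rpow_inv_iff hr]
      exact le_iSup (fun N => f N ^ r) M
    calc (⨆ M, f M) ^ r ≤ ((⨆ N, f N ^ r) ^ (1/r)) ^ r :=
          ENNReal.rpow_le_rpow (iSup_le h1) hr.le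
      _ = ⨆ N, f N ^ r := rpow_rpow_inv hr.ne'
  · exact iSup_le fun M => ENNReal.rpow_le_rpow (le_iSup f M) hr.le

/-- Jensen for probability measures. -/
lemma lintegral_rpow_le_rpow_lintegral [IsProbabilityMeasure P] {X : Ω → ℝ≥0∞}
    (hX : AEMeasurable X P) {r : ℝ} (hr0 : 0 < r) (hr1 : r < 1) :
    ∫⁻ ω, X ω ^ r ∂P ≤ (∫⁻ ω, X ω ∂P) ^ r := by
  have hconj : (1/r).HolderConjugate (1/(1-r)) :=
    Real.holderConjugate_one_div hr0 (by linarith) (by ring)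
  have h := ENNReal.lintegral_mul_le_Lp_mul_Lq P hconj (f := fun ω => X ω ^ r)
    (g := fun _ => 1) (hX.pow_const r) aemeasurable_const
  simp only [Pi.mul_apply, mul_one, ENNReal.one_rpow, lintegral_one, measure_univ,
    ENNReal.one_rpow, mul_one, one_div_one_div] at h
  calc ∫⁻ ω, X ω ^ r ∂P ≤ (∫⁻ ω, (X ω ^ r) ^ (1/r) ∂P) ^ r := h
    _ = (∫⁻ ω, X ω ∂P) ^ r := by
        congr 1
        refine lintegral_congr fun ω => ?_
        rw [← ENNReal.rpow_mul, mul_one_div, div_self hr0.ne', ENNReal.rpow_one]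

/-- finite Minkowski -/
lemma lintegral_Lp_finset_sum_le {ι : Type*} (s : Finset ι) {q : ℝ} (hq : 1 ≤ q)
    {S : ι → Ω → ℝ≥0∞} (hS : ∀ i ∈ s, AEMeasurable (S i) P) :
    (∫⁻ ω, (∑ i ∈ s, S i ω) ^ q ∂P) ^ (1/q) ≤ ∑ i ∈ s, (∫⁻ ω, S i ω ^ q ∂P) ^ (1/q) := by
  classical
  have hq0 : (0:ℝ) < q := lt_of_lt_of_le one_pos hq
  induction s using Finset.cons_induction with
  | empty =>
      simp only [Finset.sum_empty, ENNReal.zero_rpow_of_pos hq0, lintegral_zero,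
        ENNReal.zero_rpow_of_pos (by positivity : (0:ℝ) < 1/q), le_refl]
  | cons a s' hni ih =>
      have hSa := hS a (Finset.mem_cons_self a s')
      have hSs : ∀ i ∈ s', AEMeasurable (S i) P := fun i hi =>
        hS i (Finset.mem_cons_of_mem hi)
      have hsum : AEMeasurable (fun ω => ∑ i ∈ s', S i ω) P :=
        Finset.aemeasurable_fun_sum s' hSs
      calc (∫⁻ ω, (∑ i ∈ Finset.cons a s' hni, S i ω) ^ q ∂P) ^ (1/q)
          = (∫⁻ ω, ((fun ω => S a ω) + fun ω => ∑ i ∈ s', S i ω) ω ^ q ∂P) ^ (1/q) := by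
            congr 1; refine lintegral_congr fun ω => ?_
            rw [Finset.sum_cons]; rfl
        _ ≤ (∫⁻ ω, S a ω ^ q ∂P) ^ (1/q) + (∫⁻ ω, (∑ i ∈ s', S i ω) ^ q ∂P) ^ (1/q) :=
            ENNReal.lintegral_Lp_add_le hSa hsum hq
        _ ≤ _ := by
            rw [Finset.sum_cons]
            exact add_le_add_right (ih hSs) _

/-- countable Minkowski -/
lemma lintegral_Lp_tsum_le {q : ℝ} (hq : 1 < q) {S : ℕ → Ω → ℝ≥0∞}
    (hS : ∀ i, AEMeasurable (S i) P) :
    (∫⁻ ω, (∑' i, S i ω) ^ q ∂P) ^ (1/q) ≤ ∑' i, (∫⁻ ω, S i ω ^ q ∂P) ^ (1/q) := by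
  have hq0 : (0:ℝ) < q := by linarith
  have key : ∫⁻ ω, (∑' i, S i ω) ^ q ∂P ≤ (∑' i, (∫⁻ ω, S i ω ^ q ∂P) ^ (1/q)) ^ q := by
    have heq : ∀ ω, (∑' i, S i ω) ^ q = ⨆ M, (∑ i ∈ Finset.range M, S i ω) ^ q := fun ω => by
      rw [ENNReal.tsum_eq_iSup_nat, iSup_rpow hq0]
    calc ∫⁻ ω, (∑' i, S i ω) ^ q ∂P
        = ⨆ M, ∫⁻ ω, (∑ i ∈ Finset.range M, S i ω) ^ q ∂P := by
          simp_rw [heq]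
          exact lintegral_iSup'
            (fun M => (Finset.aemeasurable_fun_sum _ fun i _ => hS i).pow_const q)
            (Filter.Eventually.of_forall fun ω M N hMN =>
              ENNReal.rpow_le_rpow
                (Finset.sum_le_sum_of_subset (Finset.range_subset_range.2 hMN)) hq0.le)
      _ ≤ ⨆ M, (∑ i ∈ Finset.range M, (∫⁻ ω, S i ω ^ q ∂P) ^ (1/q)) ^ q := by
          refine iSup_mono fun M => ?_
          have h2 := lintegral_Lp_finset_sum_le (P := P) (Finset.range M) hq.le
            (fun i _ => hS i)
          calc ∫⁻ ω, (∑ i ∈ Finset.range M, S i ω) ^ q ∂P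
              = ((∫⁻ ω, (∑ i ∈ Finset.range M, S i ω) ^ q ∂P) ^ (1/q)) ^ q :=
                (rpow_rpow_inv hq0.ne').symm
            _ ≤ _ := ENNReal.rpow_le_rpow h2 hq0.le
      _ ≤ (∑' i, (∫⁻ ω, S i ω ^ q ∂P) ^ (1/q)) ^ q := by
          refine iSup_le fun M => ENNReal.rpow_le_rpow ?_ hq0.le
          exact ENNReal.sum_le_tsum _
  calc (∫⁻ ω, (∑' i, S i ω) ^ q ∂P) ^ (1/q)
      ≤ (((∑' i, (∫⁻ ω, S i ω ^ q ∂P) ^ (1/q)) ^ q) ^ (1/q)) :=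
        ENNReal.rpow_le_rpow key (by positivity)
    _ = _ := rpow_inv_rpow' hq0.ne'

/-- sup over a finset, q-th power vs sum -/
lemma sup_rpow_le_sum {ι : Type*} (s : Finset ι) (f : ι → ℝ≥0∞) {q : ℝ} (hq : 0 < q) :
    (s.sup f) ^ q ≤ ∑ i ∈ s, f i ^ q := by
  rcases s.eq_empty_or_nonempty with rfl | hne
  · simp [ENNReal.zero_rpow_of_pos hq]
  · obtain ⟨i, hi, hieq⟩ := s.exists_mem_eq_sup hne f
    rw [hieq]
    exact Finset.single_le_sum (f := fun j => f j ^ q) (fun j _ => by positivity) hi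

lemma aemeasurable_finset_sup {ι : Type*} (s : Finset ι) (f : ι → Ω → ℝ≥0∞)
    (hf : ∀ i ∈ s, AEMeasurable (f i) P) :
    AEMeasurable (fun ω => s.sup (fun i => f i ω)) P := by
  classical
  induction s using Finset.cons_induction with
  | empty => simpa using aemeasurable_const
  | cons a s' hni ih =>
      simp only [Finset.sup_cons]
      exact (hf a (Finset.mem_cons_self a s')).sup
        (ih fun i hi => hf i (Finset.mem_cons_of_mem hi))




lemma two_rpow_helper (X : ℝ) {a b c d : ℝ} (h : a + b = c + d) :
    (2:ℝ) ^ a * (X * (2:ℝ) ^ b) = ((2:ℝ) ^ c * X) * (2:ℝ) ^ d := by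
  rw [show (2:ℝ) ^ a * (X * (2:ℝ) ^ b) = X * ((2:ℝ) ^ a * (2:ℝ) ^ b) by ring,
     show ((2:ℝ) ^ c * X) * (2:ℝ) ^ d = X * ((2:ℝ) ^ c * (2:ℝ) ^ d) by ring,
     ← Real.rpow_add two_pos, ← Real.rpow_add two_pos, h]

lemma const_eq {q δ : ℝ} (hq : 0 < q) (n m : ℕ) :
    (((2:ℝ) ^ (2*n*(m+2) : ℕ)) ^ (1/q)) * (((2 * Real.sqrt n * (2⁻¹:ℝ) ^ m) ^ δ) ^ ((1:ℝ)/2))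
      = ((2:ℝ) ^ ((4*(n:ℝ))/q) * (2 * Real.sqrt n) ^ (δ/2)) * ((2:ℝ) ^ (2*(n:ℝ)/q - δ/2)) ^ m := by
  have h2 : (0:ℝ) ≤ 2 := by norm_num
  have hs : (0:ℝ) ≤ 2 * Real.sqrt n := by positivity
  have e1 : (((2:ℝ) ^ (2*n*(m+2) : ℕ)) ^ (1/q)) = (2:ℝ) ^ (((2*n*(m+2) : ℕ) : ℝ) * (1/q)) := by
    rw [← Real.rpow_natCast 2 (2*n*(m+2)), ← Real.rpow_mul h2]
  have e2 : ((2 * Real.sqrt n * (2⁻¹:ℝ) ^ m) ^ δ) ^ ((1:ℝ)/2)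
      = (2 * Real.sqrt n) ^ (δ/2) * (2:ℝ) ^ ((-(m:ℝ)) * (δ/2)) := by
    rw [← Real.rpow_mul (by positivity), show δ * ((1:ℝ)/2) = δ/2 by ring,
      Real.mul_rpow hs (by positivity)]
    congr 1
    rw [show ((2⁻¹:ℝ)) = (2:ℝ) ^ (-1:ℝ) by
        rw [Real.rpow_neg_one],
      ← Real.rpow_natCast ((2:ℝ)^(-1:ℝ)) m, ← Real.rpow_mul h2, ← Real.rpow_mul h2]
    congr 1
    ring
  have e3 : (((2:ℝ) ^ (2*(n:ℝ)/q - δ/2)) ^ m) = (2:ℝ) ^ ((2*(n:ℝ)/q - δ/2) * m) := by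
    rw [← Real.rpow_natCast ((2:ℝ) ^ (2*(n:ℝ)/q - δ/2)) m, ← Real.rpow_mul h2]
  rw [e1, e2, e3]
  rw [show (2 * Real.sqrt n) ^ (δ/2) * (2:ℝ) ^ ((-(m:ℝ)) * (δ/2))
      = ((2 * Real.sqrt n) ^ (δ/2)) * (2:ℝ) ^ ((-(m:ℝ)) * (δ/2)) by ring]
  rw [show ((2:ℝ) ^ ((4*(n:ℝ))/q) * (2 * Real.sqrt n) ^ (δ/2)) = ((2:ℝ) ^ ((4*(n:ℝ))/q) * (2 * Real.sqrt n) ^ (δ/2)) from rfl]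
  refine two_rpow_helper _ ?_
  push_cast
  field_simp
  ring



end KC
/-- Kolmogorov-type continuity/moment criterion: if all `q`-th moments of the random
field `φ` (and of its increments) are comparable to the second moments, and the second
moments of increments satisfy a Hölder bound `E‖φ(s)-φ(t)‖² ≤ K₀|s-t|^δ`, then
`E sup_t ‖φ(t)‖^p ≤ C (K₀ + E‖φ(0)‖²)^{p/2}` with `C` independent of `K₀` and `φ`. -/
theorem stmt_10 {Ω : Type*} [MeasurableSpace Ω] (P : Measure Ω) [IsProbabilityMeasure P]
    {E : Type*} [NormedAddCommGroup E] [NormedSpace ℝ E] [CompleteSpace E]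
    [TopologicalSpace.SeparableSpace E]
    (n : ℕ) (hn : 1 ≤ n) (δ : ℝ) (hδ : 0 < δ)
    (K : ℝ → ℝ) (hK : ∀ q, 2 < q → 0 < K q) (p : ℝ) (hp : 0 < p) :
    ∃ C > 0, ∀ K₀ : ℝ, 0 < K₀ → ∀ φ : (Fin n → ℝ) → Ω → E,
      (∀ᵐ ω ∂P, ContinuousOn (fun t => φ t ω) (Set.Icc 0 1)) →
      (∀ t ∈ Set.Icc (0 : Fin n → ℝ) 1, AEStronglyMeasurable (φ t) P) →
      (∀ q, 2 < q → ∀ t ∈ Set.Icc (0 : Fin n → ℝ) 1,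
        (∫⁻ ω, (‖φ t ω‖₊ : ℝ≥0∞) ^ q ∂P) ^ (1 / q) ≤
          ENNReal.ofReal (K q) * (∫⁻ ω, (‖φ t ω‖₊ : ℝ≥0∞) ^ (2 : ℝ) ∂P) ^ (1 / 2 : ℝ)) →
      (∀ q, 2 < q → ∀ s ∈ Set.Icc (0 : Fin n → ℝ) 1, ∀ t ∈ Set.Icc (0 : Fin n → ℝ) 1,
        (∫⁻ ω, (‖φ s ω - φ t ω‖₊ : ℝ≥0∞) ^ q ∂P) ^ (1 / q) ≤
          ENNReal.ofReal (K q) *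
            (∫⁻ ω, (‖φ s ω - φ t ω‖₊ : ℝ≥0∞) ^ (2 : ℝ) ∂P) ^ (1 / 2 : ℝ)) →
      (∀ s ∈ Set.Icc (0 : Fin n → ℝ) 1, ∀ t ∈ Set.Icc (0 : Fin n → ℝ) 1,
        (∫⁻ ω, (‖φ s ω - φ t ω‖₊ : ℝ≥0∞) ^ (2 : ℝ) ∂P) ≤
          ENNReal.ofReal (K₀ * eudist s t ^ δ)) →
      (∫⁻ ω, ⨆ t ∈ Set.Icc (0 : Fin n → ℝ) 1, (‖φ t ω‖₊ : ℝ≥0∞) ^ p ∂P) ≤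
        ENNReal.ofReal C *
          (ENNReal.ofReal K₀ + ∫⁻ ω, (‖φ 0 ω‖₊ : ℝ≥0∞) ^ (2 : ℝ) ∂P) ^ (p / 2) := by
  classical
  have hn0 : (0:ℝ) < n := by exact_mod_cast hn
  have hsn : 0 < Real.sqrt n := Real.sqrt_pos.2 hn0
  have h0mem : (0 : Fin n → ℝ) ∈ Set.Icc (0 : Fin n → ℝ) 1 :=
    Set.left_mem_Icc.2 zero_le_one
  -- the exponent q
  obtain ⟨q, hqdef⟩ : ∃ q : ℝ, q = 3 + p + 8 * ((n:ℝ) + 1) / δ := ⟨_, rfl⟩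
  have hextra : 0 < 8 * ((n:ℝ) + 1) / δ := by positivity
  have hq2 : 2 < q := by rw [hqdef]; linarith
  have hq0 : (0:ℝ) < q := by linarith
  have hq1 : (1:ℝ) < q := by linarith
  have hpq : p < q := by rw [hqdef]; linarith
  have hKq : 0 < K q := hK q hq2
  -- geometric ratio
  have hqlarge : 8 * ((n:ℝ) + 1) / δ ≤ q := by rw [hqdef]; linarith
  have hδq : δ * q = δ * (3 + p) + 8 * ((n:ℝ) + 1) := by
    rw [hqdef]; field_simp
  have hexp_neg : 2 * (n:ℝ) / q - δ / 2 < 0 := by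
    have h4 : 4 * (n:ℝ) < δ * q := by
      nlinarith [mul_pos hδ (show (0:ℝ) < 3 + p by linarith)]
    rw [sub_neg, div_lt_iff₀ hq0]
    have he : δ / 2 * q = (δ * q) / 2 := by ring
    rw [he]
    linarith
  set ρ : ℝ := (2:ℝ) ^ (2*(n:ℝ)/q - δ/2) with hρdef
  have hρpos : 0 < ρ := Real.rpow_pos_of_pos two_pos _
  have hρlt : ρ < 1 := Real.rpow_lt_one_of_one_lt_of_neg one_lt_two hexp_neg
  set Geo : ℝ≥0∞ := ∑' m : ℕ, (ENNReal.ofReal ρ) ^ m with hGeodef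
  have hGeo_ne_top : Geo ≠ ⊤ := by
    rw [hGeodef, ENNReal.tsum_geometric]
    refine (ENNReal.inv_lt_top.2 ?_).ne
    rw [tsub_pos_iff_lt]
    exact ENNReal.ofReal_lt_one.2 hρlt
  set c1 : ℝ := (2:ℝ) ^ ((4*(n:ℝ))/q) * (2 * Real.sqrt n) ^ (δ/2) with hc1def
  have hc1pos : 0 < c1 := by positivity
  set cV : ℝ≥0∞ := (((2:ℕ)^n : ℕ) : ℝ≥0∞) ^ (1/q) *
      (ENNReal.ofReal ((Real.sqrt n) ^ δ)) ^ (1/2 : ℝ) with hcVdef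
  have hcV_ne_top : cV ≠ ⊤ := by
    exact ENNReal.mul_ne_top
      (ENNReal.rpow_ne_top_of_nonneg (by positivity) (ENNReal.natCast_ne_top _))
      (ENNReal.rpow_ne_top_of_nonneg (by norm_num) ENNReal.ofReal_ne_top)
  set 𝒞 : ℝ≥0∞ := ENNReal.ofReal (K q) * (1 + cV + ENNReal.ofReal c1 * Geo) with h𝒞def
  have h𝒞_ne_top : 𝒞 ≠ ⊤ := by
    refine ENNReal.mul_ne_top ENNReal.ofReal_ne_top ?_
    refine ENNReal.add_ne_top.2 ⟨ENNReal.add_ne_top.2 ⟨ENNReal.one_ne_top, hcV_ne_top⟩, ?_⟩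
    exact ENNReal.mul_ne_top ENNReal.ofReal_ne_top hGeo_ne_top
  have h𝒞pos : 0 < 𝒞 := by
    refine ENNReal.mul_pos (ENNReal.ofReal_pos.2 hKq).ne' ?_
    have : (1:ℝ≥0∞) ≤ 1 + cV + ENNReal.ofReal c1 * Geo := by
      calc (1:ℝ≥0∞) ≤ 1 + cV := le_self_add
        _ ≤ _ := le_self_add
    exact (zero_lt_one.trans_le this).ne'
  have h𝒞p_ne_top : 𝒞 ^ p ≠ ⊤ := ENNReal.rpow_ne_top_of_nonneg hp.le h𝒞_ne_top
  refine ⟨(𝒞 ^ p).toReal + 1, by positivity, ?_⟩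
  intro K₀ hK₀ φ hcont hmeas hmom hmom2 hholder

  -- abbreviations
  set A : ℝ≥0∞ := ENNReal.ofReal K₀ + ∫⁻ ω, (‖φ 0 ω‖₊ : ℝ≥0∞) ^ (2:ℝ) ∂P with hAdef
  set d : ℕ → ℝ := fun m => 2 * Real.sqrt n * (2⁻¹:ℝ) ^ m with hddef
  have hdpos : ∀ m, 0 < d m := fun m => by rw [hddef]; positivity
  set pairs : ℕ → Finset ((Fin n → ℝ) × (Fin n → ℝ)) := fun m =>
    (Finset.filter (fun uv => eudist uv.1 uv.2 ≤ d m)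
      ((KC.grid n (m+1)) ×ˢ (KC.grid n m))) with hpairsdef
  set pairs0 : Finset ((Fin n → ℝ) × (Fin n → ℝ)) :=
    (KC.grid n 0).image (fun v => (v, (0 : Fin n → ℝ))) with hpairs0def
  set S : ℕ → Ω → ℝ≥0∞ := fun m ω =>
    (pairs m).sup (fun uv => (‖φ uv.1 ω - φ uv.2 ω‖₊ : ℝ≥0∞)) with hSdef
  set V : Ω → ℝ≥0∞ := fun ω =>
    pairs0.sup (fun uv => (‖φ uv.1 ω - φ uv.2 ω‖₊ : ℝ≥0∞)) with hVdef
  set G : Ω → ℝ≥0∞ := fun ω => (‖φ 0 ω‖₊ : ℝ≥0∞) + V ω + ∑' m, S m ω with hGdef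
  -- membership facts
  have hpairs_mem : ∀ m (uv : (Fin n → ℝ) × (Fin n → ℝ)), uv ∈ pairs m →
      uv.1 ∈ Set.Icc (0:Fin n → ℝ) 1 ∧ uv.2 ∈ Set.Icc (0:Fin n → ℝ) 1 ∧
        eudist uv.1 uv.2 ≤ d m := by
    intro m uv huv
    rw [hpairsdef, Finset.mem_filter, Finset.mem_product] at huv
    exact ⟨KC.grid_subset_Icc n (m+1) huv.1.1, KC.grid_subset_Icc n m huv.1.2, huv.2⟩
  have hpairs0_mem : ∀ uv : (Fin n → ℝ) × (Fin n → ℝ), uv ∈ pairs0 →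
      uv.1 ∈ Set.Icc (0:Fin n → ℝ) 1 ∧ uv.2 ∈ Set.Icc (0:Fin n → ℝ) 1 ∧
        eudist uv.1 uv.2 ≤ Real.sqrt n := by
    intro uv huv
    rw [hpairs0def, Finset.mem_image] at huv
    obtain ⟨v, hv, rfl⟩ := huv
    have hvI : v ∈ Set.Icc (0:Fin n → ℝ) 1 := KC.grid_subset_Icc n 0 hv
    refine ⟨hvI, h0mem, ?_⟩
    have h1 : eudist v (0 : Fin n → ℝ) ≤ Real.sqrt n * 1 := by
      refine KC.eudist_le zero_le_one fun i => ?_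
      have h1 := hvI.1 i
      have h2 := hvI.2 i
      simp only [Pi.zero_apply, Pi.one_apply] at h1 h2 ⊢
      rw [sub_zero, abs_of_nonneg h1]
      exact h2
    simpa using h1
  -- measurability
  have hXM : ∀ t, t ∈ Set.Icc (0:Fin n → ℝ) 1 →
      AEMeasurable (fun ω => (‖φ t ω‖₊ : ℝ≥0∞)) P := fun t ht => (hmeas t ht).enorm
  have hΔM : ∀ u v, u ∈ Set.Icc (0:Fin n → ℝ) 1 → v ∈ Set.Icc (0:Fin n → ℝ) 1 →
      AEMeasurable (fun ω => (‖φ u ω - φ v ω‖₊ : ℝ≥0∞)) P :=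
    fun u v hu hv => ((hmeas u hu).sub (hmeas v hv)).enorm
  have hSM : ∀ m, AEMeasurable (S m) P := fun m =>
    KC.aemeasurable_finset_sup (pairs m) _ (fun uv huv =>
      hΔM uv.1 uv.2 (hpairs_mem m uv huv).1 (hpairs_mem m uv huv).2.1)
  have hVM : AEMeasurable V P :=
    KC.aemeasurable_finset_sup pairs0 _ (fun uv huv =>
      hΔM uv.1 uv.2 (hpairs0_mem uv huv).1 (hpairs0_mem uv huv).2.1)
  have hGM : AEMeasurable G P :=
    ((hXM 0 h0mem).add hVM).add (AEMeasurable.ennreal_tsum hSM)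
  -- triangle inequality helper
  have tri : ∀ a b : E, (‖a‖₊ : ℝ≥0∞) ≤ (‖b‖₊ : ℝ≥0∞) + (‖a - b‖₊ : ℝ≥0∞) := by
    intro a b
    rw [← ENNReal.coe_add, ENNReal.coe_le_coe]
    calc ‖a‖₊ = ‖b + (a - b)‖₊ := by congr 1; abel
      _ ≤ ‖b‖₊ + ‖a - b‖₊ := nnnorm_add_le _ _
  -- pointwise chaining bound
  have hchain : ∀ᵐ ω ∂P, ∀ t ∈ Set.Icc (0:Fin n → ℝ) 1, (‖φ t ω‖₊ : ℝ≥0∞) ≤ G ω := by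
    filter_upwards [hcont] with ω hcω
    intro t ht
    have hprojI : ∀ M : ℕ, KC.proj n M t ∈ Set.Icc (0:Fin n → ℝ) 1 :=
      fun M => KC.grid_subset_Icc n M (KC.proj_mem_grid ht)
    have key : ∀ M : ℕ, (‖φ (KC.proj n M t) ω‖₊ : ℝ≥0∞) ≤
        (‖φ 0 ω‖₊ : ℝ≥0∞) + V ω + ∑ m ∈ Finset.range M, S m ω := by
      intro M
      induction M with
      | zero =>
        simp only [Finset.range_zero, Finset.sum_empty, add_zero]
        refine (tri (φ (KC.proj n 0 t) ω) (φ 0 ω)).trans ?_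
        refine add_le_add_right ?_ _
        have hmem : (KC.proj n 0 t, (0:Fin n → ℝ)) ∈ pairs0 := by
          rw [hpairs0def]
          exact Finset.mem_image_of_mem _ (KC.proj_mem_grid ht)
        exact Finset.le_sup (f := fun uv => (‖φ uv.1 ω - φ uv.2 ω‖₊ : ℝ≥0∞)) hmem
      | succ M ih =>
        refine (tri (φ (KC.proj n (M+1) t) ω) (φ (KC.proj n M t) ω)).trans ?_
        have hmem : (KC.proj n (M+1) t, KC.proj n M t) ∈ pairs M := by
          rw [hpairsdef, Finset.mem_filter, Finset.mem_product]
          refine ⟨⟨KC.proj_mem_grid ht, KC.proj_mem_grid ht⟩, ?_⟩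
          have h1 : eudist (KC.proj n (M+1) t) t ≤ Real.sqrt n * (2⁻¹:ℝ)^(M+1) := by
            rw [KC.eudist_comm]
            exact KC.eudist_proj (M+1) t
          have h2 : eudist t (KC.proj n M t) ≤ Real.sqrt n * (2⁻¹:ℝ)^M :=
            KC.eudist_proj M t
          have h3 := KC.eudist_triangle (KC.proj n (M+1) t) t (KC.proj n M t)
          have h4 : (0:ℝ) ≤ Real.sqrt n * (2⁻¹:ℝ)^M := by positivity
          rw [hddef]
          simp only []
          have h5 : (2⁻¹:ℝ)^(M+1) = (2⁻¹:ℝ)^M * 2⁻¹ := pow_succ _ _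
          nlinarith [hsn.le, pow_nonneg (by norm_num : (0:ℝ) ≤ 2⁻¹) M]
        have hle : (‖φ (KC.proj n (M+1) t) ω - φ (KC.proj n M t) ω‖₊ : ℝ≥0∞) ≤ S M ω :=
          Finset.le_sup (f := fun uv => (‖φ uv.1 ω - φ uv.2 ω‖₊ : ℝ≥0∞)) hmem
        calc (‖φ (KC.proj n M t) ω‖₊ : ℝ≥0∞) +
              (‖φ (KC.proj n (M+1) t) ω - φ (KC.proj n M t) ω‖₊ : ℝ≥0∞)
            ≤ ((‖φ 0 ω‖₊ : ℝ≥0∞) + V ω + ∑ m ∈ Finset.range M, S m ω) + S M ω :=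
              add_le_add ih hle
          _ = (‖φ 0 ω‖₊ : ℝ≥0∞) + V ω + ∑ m ∈ Finset.range (M+1), S m ω := by
              rw [Finset.sum_range_succ, add_assoc]
    have hlim : Tendsto (fun M => (‖φ t ω - φ (KC.proj n M t) ω‖₊ : ℝ≥0∞)) atTop (nhds 0) := by
      have h1 : Tendsto (fun M => φ (KC.proj n M t) ω) atTop (nhds (φ t ω)) := by
        have hc : ContinuousWithinAt (fun s => φ s ω) (Set.Icc 0 1) t := hcω t ht
        refine hc.tendsto.comp ?_
        exact tendsto_nhdsWithin_of_tendsto_nhds_of_eventually_within _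
          (KC.tendsto_proj t) (Eventually.of_forall hprojI)
      have h2 : Tendsto (fun M => φ t ω - φ (KC.proj n M t) ω) atTop (nhds 0) := by
        have h2' := (tendsto_const_nhds (x := φ t ω)).sub h1
        rwa [sub_self] at h2'
      have h3 := h2.nnnorm
      rw [nnnorm_zero] at h3
      exact (ENNReal.tendsto_coe.2 h3)
    have hineq : ∀ M : ℕ, (‖φ t ω‖₊ : ℝ≥0∞) ≤
        (‖φ t ω - φ (KC.proj n M t) ω‖₊ : ℝ≥0∞) + G ω := by
      intro M
      refine (tri (φ t ω) (φ (KC.proj n M t) ω)).trans ?_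
      rw [add_comm]
      refine add_le_add_right ?_ _
      refine (key M).trans ?_
      rw [hGdef]
      exact add_le_add_right (ENNReal.sum_le_tsum _) _
    have htend : Tendsto (fun M => (‖φ t ω - φ (KC.proj n M t) ω‖₊ : ℝ≥0∞) + G ω)
        atTop (nhds (G ω)) := by
      have := hlim.add (tendsto_const_nhds (x := G ω))
      rwa [zero_add] at this
    exact ge_of_tendsto htend (Eventually.of_forall hineq)
  -- moment bound for a single pair
  have hpair : ∀ u v, u ∈ Set.Icc (0:Fin n → ℝ) 1 → v ∈ Set.Icc (0:Fin n → ℝ) 1 →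
      ∀ dd : ℝ, 0 ≤ dd → eudist u v ≤ dd →
      (∫⁻ ω, (‖φ u ω - φ v ω‖₊ : ℝ≥0∞) ^ q ∂P) ^ (1/q) ≤
        ENNReal.ofReal (K q) * (ENNReal.ofReal (K₀ * dd ^ δ)) ^ (1/2 : ℝ) := by
    intro u v hu hv dd hdd hdist
    refine (hmom2 q hq2 u hu v hv).trans ?_
    refine mul_le_mul_right (ENNReal.rpow_le_rpow ?_ (by norm_num)) _
    refine (hholder u hu v hv).trans (ENNReal.ofReal_le_ofReal ?_)
    exact mul_le_mul_of_nonneg_left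
      (Real.rpow_le_rpow (KC.eudist_nonneg u v) hdist hδ.le) hK₀.le
  -- generic sup-over-pairs moment bound
  have hsupq : ∀ (s : Finset ((Fin n → ℝ) × (Fin n → ℝ))) (dd : ℝ), 0 ≤ dd →
      (∀ uv ∈ s, uv.1 ∈ Set.Icc (0:Fin n → ℝ) 1 ∧ uv.2 ∈ Set.Icc (0:Fin n → ℝ) 1 ∧
        eudist uv.1 uv.2 ≤ dd) →
      (∫⁻ ω, (s.sup (fun uv => (‖φ uv.1 ω - φ uv.2 ω‖₊ : ℝ≥0∞))) ^ q ∂P) ^ (1/q) ≤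
        ((s.card : ℝ≥0∞)) ^ (1/q) *
          (ENNReal.ofReal (K q) * (ENNReal.ofReal (K₀ * dd ^ δ)) ^ (1/2 : ℝ)) := by
    intro s dd hdd hmem
    have hpt : ∫⁻ ω, (s.sup fun uv => (‖φ uv.1 ω - φ uv.2 ω‖₊ : ℝ≥0∞)) ^ q ∂P
        ≤ ∑ _uv ∈ s, (ENNReal.ofReal (K q) * (ENNReal.ofReal (K₀ * dd ^ δ)) ^ (1/2:ℝ)) ^ q := by
      calc ∫⁻ ω, (s.sup fun uv => (‖φ uv.1 ω - φ uv.2 ω‖₊ : ℝ≥0∞)) ^ q ∂P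
          ≤ ∫⁻ ω, ∑ uv ∈ s, (‖φ uv.1 ω - φ uv.2 ω‖₊ : ℝ≥0∞) ^ q ∂P :=
            lintegral_mono fun ω => KC.sup_rpow_le_sum s _ hq0
        _ = ∑ uv ∈ s, ∫⁻ ω, (‖φ uv.1 ω - φ uv.2 ω‖₊ : ℝ≥0∞) ^ q ∂P :=
            lintegral_finset_sum' s (fun uv huv =>
              (hΔM uv.1 uv.2 (hmem uv huv).1 (hmem uv huv).2.1).pow_const q)
        _ ≤ _ := by
            refine Finset.sum_le_sum fun uv huv => ?_
            obtain ⟨hu, hv, hdi⟩ := hmem uv huv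
            have h := hpair uv.1 uv.2 hu hv dd hdd hdi
            calc ∫⁻ ω, (‖φ uv.1 ω - φ uv.2 ω‖₊ : ℝ≥0∞) ^ q ∂P
                = ((∫⁻ ω, (‖φ uv.1 ω - φ uv.2 ω‖₊ : ℝ≥0∞) ^ q ∂P) ^ (1/q)) ^ q :=
                  (KC.rpow_rpow_inv hq0.ne').symm
              _ ≤ _ := ENNReal.rpow_le_rpow h hq0.le
    calc (∫⁻ ω, (s.sup fun uv => (‖φ uv.1 ω - φ uv.2 ω‖₊ : ℝ≥0∞)) ^ q ∂P) ^ (1/q)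
        ≤ (∑ _uv ∈ s, (ENNReal.ofReal (K q) *
            (ENNReal.ofReal (K₀ * dd ^ δ)) ^ (1/2:ℝ)) ^ q) ^ (1/q) :=
          ENNReal.rpow_le_rpow hpt (by positivity)
      _ = ((s.card : ℝ≥0∞) * (ENNReal.ofReal (K q) *
            (ENNReal.ofReal (K₀ * dd ^ δ)) ^ (1/2:ℝ)) ^ q) ^ (1/q) := by
          rw [Finset.sum_const, nsmul_eq_mul]
      _ = _ := by
          rw [ENNReal.mul_rpow_of_nonneg _ _ (by positivity : (0:ℝ) ≤ 1/q),
            KC.rpow_inv_rpow' hq0.ne']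

  -- the three moment bounds
  have hX0 := hmom q hq2 0 h0mem
  have hVq := hsupq pairs0 (Real.sqrt n) hsn.le hpairs0_mem
  have hSq : ∀ m, (∫⁻ ω, S m ω ^ q ∂P) ^ (1/q) ≤
      (((pairs m).card : ℝ≥0∞)) ^ (1/q) *
        (ENNReal.ofReal (K q) * (ENNReal.ofReal (K₀ * d m ^ δ)) ^ (1/2:ℝ)) :=
    fun m => hsupq (pairs m) (d m) (hdpos m).le (hpairs_mem m)
  -- cardinality bounds
  have hcard0 : pairs0.card ≤ 2^n := by
    rw [hpairs0def]
    refine Finset.card_image_le.trans ?_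
    have h := KC.grid_card_le n 0
    calc (KC.grid n 0).card ≤ (2^0+1)^n := h
      _ = 2^n := by norm_num
  have hcardm : ∀ m, (pairs m).card ≤ 2^(2*n*(m+2)) := by
    intro m
    rw [hpairsdef]
    refine (Finset.card_filter_le _ _).trans ?_
    rw [Finset.card_product]
    have e1 : (2:ℕ)^(m+1)+1 ≤ 2^(m+2) := by
      have h1 : 1 ≤ (2:ℕ)^(m+1) := Nat.one_le_two_pow
      calc (2:ℕ)^(m+1)+1 ≤ 2^(m+1)+2^(m+1) := by omega
        _ = 2^(m+2) := by ring
    have e2 : (2:ℕ)^m+1 ≤ 2^(m+2) := by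
      have h1 : 1 ≤ (2:ℕ)^m := Nat.one_le_two_pow
      have h2 : (2:ℕ)^m ≤ 2^(m+1) := Nat.pow_le_pow_right (by norm_num) (by omega)
      calc (2:ℕ)^m+1 ≤ 2^m+2^m := by omega
        _ = 2^(m+1) := by ring
        _ ≤ 2^(m+2) := Nat.pow_le_pow_right (by norm_num) (by omega)
    calc (KC.grid n (m+1)).card * (KC.grid n m).card
        ≤ (2^(m+1)+1)^n * (2^m+1)^n :=
          Nat.mul_le_mul (KC.grid_card_le n (m+1)) (KC.grid_card_le n m)
      _ ≤ (2^(m+2))^n * (2^(m+2))^n :=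
          Nat.mul_le_mul (Nat.pow_le_pow_left e1 n) (Nat.pow_le_pow_left e2 n)
      _ = 2^(2*n*(m+2)) := by
          rw [← pow_mul, ← pow_add]
          congr 1
          ring
  -- bounding pieces by A
  have hA_K₀ : (ENNReal.ofReal K₀) ^ (1/2:ℝ) ≤ A ^ (1/2:ℝ) :=
    ENNReal.rpow_le_rpow (by rw [hAdef]; exact le_self_add) (by norm_num)
  have hsplit : ∀ x : ℝ, 0 ≤ x → (ENNReal.ofReal (K₀ * x)) ^ (1/2:ℝ)
      = (ENNReal.ofReal K₀) ^ (1/2:ℝ) * (ENNReal.ofReal x) ^ (1/2:ℝ) := by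
    intro x hx
    rw [ENNReal.ofReal_mul hK₀.le, ENNReal.mul_rpow_of_nonneg _ _ (by norm_num : (0:ℝ) ≤ 1/2)]
  have hterm1 : (∫⁻ ω, (‖φ 0 ω‖₊:ℝ≥0∞) ^ q ∂P) ^ (1/q) ≤
      ENNReal.ofReal (K q) * A ^ (1/2:ℝ) := by
    refine hX0.trans (mul_le_mul_right (ENNReal.rpow_le_rpow ?_ (by norm_num)) _)
    rw [hAdef]; exact le_add_self
  have hterm2 : (∫⁻ ω, V ω ^ q ∂P) ^ (1/q) ≤
      ENNReal.ofReal (K q) * A ^ (1/2:ℝ) * cV := by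
    refine hVq.trans ?_
    have hco : ((pairs0.card : ℝ≥0∞)) ^ (1/q) ≤ (((2:ℕ)^n : ℕ) : ℝ≥0∞) ^ (1/q) :=
      ENNReal.rpow_le_rpow (Nat.cast_le.2 hcard0) (by positivity)
    calc ((pairs0.card : ℝ≥0∞)) ^ (1/q) *
          (ENNReal.ofReal (K q) * (ENNReal.ofReal (K₀ * Real.sqrt n ^ δ)) ^ (1/2:ℝ))
        = ((pairs0.card : ℝ≥0∞)) ^ (1/q) * (ENNReal.ofReal (K q) *
            ((ENNReal.ofReal K₀) ^ (1/2:ℝ) * (ENNReal.ofReal (Real.sqrt n ^ δ)) ^ (1/2:ℝ))) := by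
          rw [hsplit _ (by positivity)]
      _ ≤ (((2:ℕ)^n : ℕ) : ℝ≥0∞) ^ (1/q) * (ENNReal.ofReal (K q) *
            (A ^ (1/2:ℝ) * (ENNReal.ofReal (Real.sqrt n ^ δ)) ^ (1/2:ℝ))) := by
          gcongr
      _ = ENNReal.ofReal (K q) * A ^ (1/2:ℝ) * cV := by
          rw [hcVdef]; ring
  have hterm3 : ∀ m, (∫⁻ ω, S m ω ^ q ∂P) ^ (1/q) ≤
      ENNReal.ofReal (K q) * A ^ (1/2:ℝ) * (ENNReal.ofReal c1 * (ENNReal.ofReal ρ)^m) := by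
    intro m
    refine (hSq m).trans ?_
    have hcast : (((pairs m).card : ℝ≥0∞)) ^ (1/q) ≤
        (ENNReal.ofReal ((2:ℝ)^(2*n*(m+2)))) ^ (1/q) := by
      refine ENNReal.rpow_le_rpow ?_ (by positivity)
      rw [show ((2:ℝ)^(2*n*(m+2))) = (((2^(2*n*(m+2)) : ℕ) : ℝ)) by push_cast; ring,
        ENNReal.ofReal_natCast]
      exact_mod_cast hcardm m
    calc ((pairs m).card : ℝ≥0∞) ^ (1/q) *
          (ENNReal.ofReal (K q) * (ENNReal.ofReal (K₀ * d m ^ δ)) ^ (1/2:ℝ))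
        = ((pairs m).card : ℝ≥0∞) ^ (1/q) * (ENNReal.ofReal (K q) *
            ((ENNReal.ofReal K₀) ^ (1/2:ℝ) * (ENNReal.ofReal (d m ^ δ)) ^ (1/2:ℝ))) := by
          rw [hsplit _ (by positivity)]
      _ ≤ (ENNReal.ofReal ((2:ℝ)^(2*n*(m+2)))) ^ (1/q) * (ENNReal.ofReal (K q) *
            (A ^ (1/2:ℝ) * (ENNReal.ofReal (d m ^ δ)) ^ (1/2:ℝ))) := by
          gcongr
      _ = ENNReal.ofReal (K q) * A ^ (1/2:ℝ) *
            ((ENNReal.ofReal ((2:ℝ)^(2*n*(m+2)))) ^ (1/q) *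
              (ENNReal.ofReal (d m ^ δ)) ^ (1/2:ℝ)) := by ring
      _ ≤ ENNReal.ofReal (K q) * A ^ (1/2:ℝ) * (ENNReal.ofReal c1 * (ENNReal.ofReal ρ)^m) := by
          refine mul_le_mul_right (le_of_eq ?_) _
          rw [ENNReal.ofReal_rpow_of_pos (by positivity),
            ENNReal.ofReal_rpow_of_pos (by positivity),
            ← ENNReal.ofReal_mul (by positivity)]
          have hdm : d m = 2 * Real.sqrt n * (2⁻¹:ℝ) ^ m := by rw [hddef]
          rw [hdm]
          rw [show ((2:ℝ)^(2*n*(m+2))) = ((2:ℝ) ^ (2*n*(m+2) : ℕ)) from rfl]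
          rw [KC.const_eq hq0 n m, ← hc1def, ← hρdef,
            ENNReal.ofReal_mul hc1pos.le, ENNReal.ofReal_pow hρpos.le]
  have htsum : ∑' m, (∫⁻ ω, S m ω ^ q ∂P) ^ (1/q) ≤
      ENNReal.ofReal (K q) * A ^ (1/2:ℝ) * (ENNReal.ofReal c1 * Geo) := by
    calc ∑' m, (∫⁻ ω, S m ω ^ q ∂P) ^ (1/q)
        ≤ ∑' m, (ENNReal.ofReal (K q) * A ^ (1/2:ℝ) *
            (ENNReal.ofReal c1 * (ENNReal.ofReal ρ)^m)) := ENNReal.tsum_le_tsum hterm3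
      _ = (ENNReal.ofReal (K q) * A ^ (1/2:ℝ) * ENNReal.ofReal c1) *
            ∑' m, (ENNReal.ofReal ρ)^m := by
          rw [← ENNReal.tsum_mul_left]
          exact tsum_congr fun m => by ring
      _ = ENNReal.ofReal (K q) * A ^ (1/2:ℝ) * (ENNReal.ofReal c1 * Geo) := by
          rw [← hGeodef]; ring
  -- Minkowski decomposition
  have hGdec : (∫⁻ ω, G ω ^ q ∂P) ^ (1/q) ≤
      (∫⁻ ω, (‖φ 0 ω‖₊:ℝ≥0∞) ^ q ∂P) ^ (1/q) + (∫⁻ ω, V ω ^ q ∂P) ^ (1/q)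
        + ∑' m, (∫⁻ ω, S m ω ^ q ∂P) ^ (1/q) := by
    have h1 := ENNReal.lintegral_Lp_add_le (μ := P)
      (f := fun ω => (‖φ 0 ω‖₊:ℝ≥0∞) + V ω) (g := fun ω => ∑' m, S m ω)
      ((hXM 0 h0mem).add hVM) (AEMeasurable.ennreal_tsum hSM) hq1.le
    have h2 := ENNReal.lintegral_Lp_add_le (μ := P)
      (f := fun ω => (‖φ 0 ω‖₊:ℝ≥0∞)) (g := V) (hXM 0 h0mem) hVM hq1.le
    have h3 := KC.lintegral_Lp_tsum_le (P := P) hq1 hSM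
    simp only [Pi.add_apply] at h1 h2
    calc (∫⁻ ω, G ω ^ q ∂P) ^ (1/q)
        ≤ (∫⁻ ω, ((‖φ 0 ω‖₊:ℝ≥0∞) + V ω) ^ q ∂P) ^ (1/q)
            + (∫⁻ ω, (∑' m, S m ω) ^ q ∂P) ^ (1/q) := h1
      _ ≤ ((∫⁻ ω, (‖φ 0 ω‖₊:ℝ≥0∞) ^ q ∂P) ^ (1/q) + (∫⁻ ω, V ω ^ q ∂P) ^ (1/q))
            + ∑' m, (∫⁻ ω, S m ω ^ q ∂P) ^ (1/q) := add_le_add h2 h3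
  have hΛG : (∫⁻ ω, G ω ^ q ∂P) ^ (1/q) ≤ 𝒞 * A ^ (1/2:ℝ) := by
    refine hGdec.trans ?_
    refine (add_le_add (add_le_add hterm1 hterm2) htsum).trans (le_of_eq ?_)
    rw [h𝒞def]
    ring
  have hGq : ∫⁻ ω, G ω ^ q ∂P ≤ (𝒞 * A ^ (1/2:ℝ)) ^ q := by
    calc ∫⁻ ω, G ω ^ q ∂P = ((∫⁻ ω, G ω ^ q ∂P) ^ (1/q)) ^ q :=
          (KC.rpow_rpow_inv hq0.ne').symm
      _ ≤ _ := ENNReal.rpow_le_rpow hΛG hq0.le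
  have hqpq : q * (p/q) = p := by field_simp
  have hGp : ∫⁻ ω, G ω ^ p ∂P ≤ (𝒞 * A ^ (1/2:ℝ)) ^ p := by
    have h0 : (0:ℝ) < p/q := by positivity
    have h1 : p/q < 1 := (div_lt_one hq0).2 hpq
    calc ∫⁻ ω, G ω ^ p ∂P = ∫⁻ ω, (G ω ^ q) ^ (p/q) ∂P := by
          refine lintegral_congr fun ω => ?_
          rw [← ENNReal.rpow_mul, hqpq]
      _ ≤ (∫⁻ ω, G ω ^ q ∂P) ^ (p/q) :=
          KC.lintegral_rpow_le_rpow_lintegral (hGM.pow_const q) h0 h1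
      _ ≤ ((𝒞 * A ^ (1/2:ℝ)) ^ q) ^ (p/q) := ENNReal.rpow_le_rpow hGq h0.le
      _ = (𝒞 * A ^ (1/2:ℝ)) ^ p := by rw [← ENNReal.rpow_mul, hqpq]
  have hmain : (∫⁻ ω, ⨆ t ∈ Set.Icc (0:Fin n → ℝ) 1, (‖φ t ω‖₊:ℝ≥0∞) ^ p ∂P)
      ≤ ∫⁻ ω, G ω ^ p ∂P := by
    refine lintegral_mono_ae ?_
    filter_upwards [hchain] with ω hω
    exact iSup₂_le fun t ht => ENNReal.rpow_le_rpow (hω t ht) hp.le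
  have hfinal : (𝒞 * A ^ (1/2:ℝ)) ^ p ≤ ENNReal.ofReal ((𝒞 ^ p).toReal + 1) * A ^ (p/2) := by
    rw [ENNReal.mul_rpow_of_nonneg _ _ hp.le, ← ENNReal.rpow_mul,
      show (1/2:ℝ) * p = p/2 by ring]
    refine mul_le_mul_left ?_ _
    conv_lhs => rw [← ENNReal.ofReal_toReal h𝒞p_ne_top]
    exact ENNReal.ofReal_le_ofReal (by linarith [ENNReal.toReal_nonneg (a := 𝒞 ^ p)])
  exact (hmain.trans hGp).trans hfinal
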